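/- Assume S₁ = ∫_{−∞}^0 q(t)/r(t) dt = ∞, q₀ := inf_{x∈ℝ} q(x) > 0, and q(x) → ∞ as |x| → ∞. Then the boundary value problem −r(x)y′(x)+q(x)y(x)=f(x), lim_{|x|→∞} y(x)=0, is correctly solvable in C(ℝ). -/

import Mathlib

open MeasureTheory Filter Set Real
open scoped ENNReal NNReal

noncomputable section

/-- `y` is a solution of the boundary value problem `-r·y' + q·y = f` on `ℝ` with
`y → 0` at `±∞`: `y` is continuous, locally absolutely continuous (encoded through the
integral identity, i.e. `y` is the integral of its a.e. derivative `(q·y - f)/r`),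
and tends to `0` at both infinities. -/
def IsSolution (r q f y : ℝ → ℝ) : Prop :=
  Continuous y ∧
  (∀ a b : ℝ, y b - y a = ∫ t in a..b, (q t * y t - f t) / r t) ∧
  Tendsto y atBot (nhds 0) ∧ Tendsto y atTop (nhds 0)

/-- Correct solvability of the problem `-r·y' + q·y = f`, `y(±∞) = 0`, in `C(ℝ)`
(bounded continuous functions with the sup-norm): for every bounded continuous `f`
there is a unique solution `y` (such a solution is automatically bounded and
continuous), and `sup|y| ≤ c·sup|f|` with a constant `c ∈ (0,∞)` independent of `f`. -/
def CorrectlySolvableC (r q : ℝ → ℝ) : Prop :=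
  ∃ c : ℝ, 0 < c ∧
    ∀ f : ℝ → ℝ, Continuous f → (∃ M : ℝ, ∀ x, |f x| ≤ M) →
      (∃! y : ℝ → ℝ, IsSolution r q f y) ∧
      ∀ y : ℝ → ℝ, IsSolution r q f y → ∀ x, |y x| ≤ c * ⨆ t, |f t|

/-- `S₁ = ∫_{-∞}^0 q(t)/r(t) dt`, as a (possibly infinite) lower Lebesgue integral. -/
def S1E (r q : ℝ → ℝ) : ℝ≥0∞ :=
  ∫⁻ t in Set.Iio (0 : ℝ), ENNReal.ofReal (q t / r t)

lemma core_fubini {a b : ℝ} (p s : ℝ → ℝ)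
    (hp : IntegrableOn p (Set.Ioc a b)) (hs : IntegrableOn s (Set.Ioc a b)) :
    (∫ x in Set.Ioc a b, p x * ∫ t in Set.Ioc a x, s t)
      + (∫ x in Set.Ioc a b, (∫ t in Set.Ioc a x, p t) * s x)
      = (∫ x in Set.Ioc a b, p x) * ∫ x in Set.Ioc a b, s x := by
  set μ := volume.restrict (Set.Ioc a b) with hμdef
  have hIoc : MeasurableSet (Set.Ioc a b) := measurableSet_Ioc
  have h1 : Integrable (fun z : ℝ × ℝ => p z.1 * s z.2) (μ.prod μ) := hp.mul_prod hs
  have hT : MeasurableSet {z : ℝ × ℝ | z.2 ≤ z.1} :=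
    measurableSet_le measurable_snd measurable_fst
  have hT' : MeasurableSet {z : ℝ × ℝ | z.1 ≤ z.2} :=
    measurableSet_le measurable_fst measurable_snd
  have hD : MeasurableSet {z : ℝ × ℝ | z.1 = z.2} :=
    measurableSet_eq_fun measurable_fst measurable_snd
  set F := ({z : ℝ × ℝ | z.2 ≤ z.1}).indicator (fun z => p z.1 * s z.2) with hFdef
  set F' := ({z : ℝ × ℝ | z.1 ≤ z.2}).indicator (fun z => p z.1 * s z.2) with hF'def
  have hF : Integrable F (μ.prod μ) := h1.indicator hT
  have hF' : Integrable F' (μ.prod μ) := h1.indicator hT'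
  have hsum : ∀ z : ℝ × ℝ, F z + F' z
      = p z.1 * s z.2 + ({z : ℝ × ℝ | z.1 = z.2}).indicator (fun z => p z.1 * s z.2) z := by
    intro z
    rcases lt_trichotomy z.1 z.2 with h | h | h
    · simp [hFdef, hF'def, Set.indicator_apply, not_le.mpr h, h.le, h.ne]
    · simp [hFdef, hF'def, Set.indicator_apply, h.le, h.ge, h]
    · simp [hFdef, hF'def, Set.indicator_apply, not_le.mpr h, h.le, h.ne']
  have hdiag : (μ.prod μ) {z : ℝ × ℝ | z.1 = z.2} = 0 := by
    rw [Measure.prod_apply hD]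
    have : ∀ x : ℝ, μ (Prod.mk x ⁻¹' {z : ℝ × ℝ | z.1 = z.2}) = 0 := by
      intro x
      have hset : (Prod.mk x ⁻¹' {z : ℝ × ℝ | z.1 = z.2}) = {x} := by
        ext y; simp [eq_comm]
      rw [hset, hμdef, Measure.restrict_apply' hIoc]
      exact measure_mono_null Set.inter_subset_left (measure_singleton x)
    simp [this]
  have hdiagint : ∫ z, ({z : ℝ × ℝ | z.1 = z.2}).indicator
      (fun z => p z.1 * s z.2) z ∂(μ.prod μ) = 0 := by
    rw [integral_indicator hD, Measure.restrict_eq_zero.mpr hdiag, integral_zero_measure]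
  have eq1 : ∫ z, (F z + F' z) ∂(μ.prod μ)
      = (∫ x in Set.Ioc a b, p x) * ∫ x in Set.Ioc a b, s x := by
    calc ∫ z, (F z + F' z) ∂(μ.prod μ)
        = ∫ z : ℝ × ℝ, (p z.1 * s z.2
            + ({z : ℝ × ℝ | z.1 = z.2}).indicator (fun z => p z.1 * s z.2) z) ∂(μ.prod μ) := by
          exact integral_congr_ae (Filter.Eventually.of_forall hsum)
      _ = (∫ z : ℝ × ℝ, p z.1 * s z.2 ∂(μ.prod μ)) + ∫ z, ({z : ℝ × ℝ | z.1 = z.2}).indicator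
            (fun z => p z.1 * s z.2) z ∂(μ.prod μ) := integral_add h1 (h1.indicator hD)
      _ = (∫ x in Set.Ioc a b, p x) * ∫ x in Set.Ioc a b, s x := by
          rw [hdiagint, add_zero, integral_prod_mul]
  have hinner1 : ∀ x : ℝ, Integrable (fun t => F (x, t)) μ := by
    intro x
    have : (fun t => F (x, t)) = (Set.Iic x).indicator (fun t => p x * s t) := by
      funext t; simp [hFdef, Set.indicator_apply]
    rw [this]
    exact (hs.const_mul _).indicator measurableSet_Iic
  have hinner2 : ∀ x : ℝ, Integrable (fun t => F' (x, t)) μ := by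
    intro x
    have : (fun t => F' (x, t)) = (Set.Ici x).indicator (fun t => p x * s t) := by
      funext t; simp [hF'def, Set.indicator_apply]
    rw [this]
    exact (hs.const_mul _).indicator measurableSet_Ici
  have hv1 : ∀ x ∈ Set.Ioc a b, (∫ t, F (x, t) ∂μ) = p x * ∫ t in Set.Ioc a x, s t := by
    intro x hx
    have h2 : (fun t => F (x, t)) = (Set.Iic x).indicator (fun t => p x * s t) := by
      funext t; simp [hFdef, Set.indicator_apply]
    rw [h2, integral_indicator measurableSet_Iic, hμdef, Measure.restrict_restrict measurableSet_Iic]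
    have : Set.Iic x ∩ Set.Ioc a b = Set.Ioc a x := by
      rw [Set.inter_comm, Set.Ioc_inter_Iic, min_eq_right hx.2]
    rw [this, integral_const_mul]
  have hv2 : ∀ x ∈ Set.Ioc a b, (∫ t, F' (t, x) ∂μ) = (∫ t in Set.Ioc a x, p t) * s x := by
    intro x hx
    have h2 : (fun t => F' (t, x)) = (Set.Iic x).indicator (fun t => p t * s x) := by
      funext t; simp [hF'def, Set.indicator_apply]
    rw [h2, integral_indicator measurableSet_Iic, hμdef, Measure.restrict_restrict measurableSet_Iic]
    have : Set.Iic x ∩ Set.Ioc a b = Set.Ioc a x := by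
      rw [Set.inter_comm, Set.Ioc_inter_Iic, min_eq_right hx.2]
    rw [this, integral_mul_const]
  have eq2a : ∫ z, F z ∂(μ.prod μ)
      = ∫ x in Set.Ioc a b, p x * ∫ t in Set.Ioc a x, s t := by
    rw [MeasureTheory.integral_prod _ hF]
    refine integral_congr_ae ?_
    filter_upwards [ae_restrict_mem hIoc] with x hx
    exact hv1 x hx
  have eq2b : ∫ z, F' z ∂(μ.prod μ)
      = ∫ x in Set.Ioc a b, (∫ t in Set.Ioc a x, p t) * s x := by
    rw [MeasureTheory.integral_prod_symm _ hF']
    refine integral_congr_ae ?_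
    filter_upwards [ae_restrict_mem hIoc] with x hx
    exact hv2 x hx
  have := integral_add hF hF'
  rw [eq1] at this
  rw [← eq2a, ← eq2b, ← this]

lemma ibp_primitive {a b : ℝ} (hab : a ≤ b) (p s u v : ℝ → ℝ)
    (hp : IntegrableOn p (Set.Ioc a b)) (hs : IntegrableOn s (Set.Ioc a b))
    (hu : ∀ x ∈ Set.Icc a b, u x - u a = ∫ t in Set.Ioc a x, p t)
    (hv : ∀ x ∈ Set.Icc a b, v x - v a = ∫ t in Set.Ioc a x, s t)
    (huc : ContinuousOn u (Set.Icc a b)) (hvc : ContinuousOn v (Set.Icc a b)) :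
    u b * v b - u a * v a = ∫ x in Set.Ioc a b, (p x * v x + u x * s x) := by
  set μ := volume.restrict (Set.Ioc a b) with hμdef
  have hIoc : MeasurableSet (Set.Ioc a b) := measurableSet_Ioc
  have hsub : Set.Ioc a b ⊆ Set.Icc a b := Set.Ioc_subset_Icc_self
  have hub : u b = u a + ∫ t in Set.Ioc a b, p t := by
    have := hu b ⟨hab, le_rfl⟩; linarith
  have hvb : v b = v a + ∫ t in Set.Ioc a b, s t := by
    have := hv b ⟨hab, le_rfl⟩; linarith
  obtain ⟨Cu, hCu⟩ := (isCompact_Icc (a := a) (b := b)).exists_bound_of_continuousOn huc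
  obtain ⟨Cv, hCv⟩ := (isCompact_Icc (a := a) (b := b)).exists_bound_of_continuousOn hvc
  have hvm : AEStronglyMeasurable v μ :=
    (hvc.mono hsub).aestronglyMeasurable hIoc
  have hum : AEStronglyMeasurable u μ :=
    (huc.mono hsub).aestronglyMeasurable hIoc
  have hpv : Integrable (fun x => p x * v x) μ := by
    have := Integrable.bdd_mul (c := Cv) hp hvm ?_
    · simpa [mul_comm] using this
    · filter_upwards [ae_restrict_mem hIoc] with x hx
      exact hCv x (hsub hx)
  have hus : Integrable (fun x => u x * s x) μ := by
    exact Integrable.bdd_mul (c := Cu) hs hum <| by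
      filter_upwards [ae_restrict_mem hIoc] with x hx
      exact hCu x (hsub hx)
  have hpV : Integrable (fun x => p x * ∫ t in Set.Ioc a x, s t) μ := by
    refine (hpv.sub (hp.const_mul (v a))).congr ?_
    filter_upwards [ae_restrict_mem hIoc] with x hx
    have := hv x (hsub hx)
    simp only [Pi.sub_apply]; rw [← this]; ring
  have hUs : Integrable (fun x => (∫ t in Set.Ioc a x, p t) * s x) μ := by
    refine (hus.sub (hs.const_mul (u a))).congr ?_
    filter_upwards [ae_restrict_mem hIoc] with x hx
    have := hu x (hsub hx)
    simp only [Pi.sub_apply]; rw [← this]; ring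
  have e1 : ∫ x in Set.Ioc a b, p x * v x
      = v a * (∫ t in Set.Ioc a b, p t) + ∫ x in Set.Ioc a b, p x * ∫ t in Set.Ioc a x, s t := by
    have : ∫ x in Set.Ioc a b, p x * v x
        = ∫ x in Set.Ioc a b, (v a * p x + p x * ∫ t in Set.Ioc a x, s t) := by
      refine integral_congr_ae ?_
      filter_upwards [ae_restrict_mem hIoc] with x hx
      have := hv x (hsub hx)
      rw [← this]; ring
    rw [this, integral_add (hp.const_mul (v a)) hpV, integral_const_mul]
  have e2 : ∫ x in Set.Ioc a b, u x * s x
      = u a * (∫ t in Set.Ioc a b, s t) + ∫ x in Set.Ioc a b, (∫ t in Set.Ioc a x, p t) * s x := by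
    have : ∫ x in Set.Ioc a b, u x * s x
        = ∫ x in Set.Ioc a b, (u a * s x + (∫ t in Set.Ioc a x, p t) * s x) := by
      refine integral_congr_ae ?_
      filter_upwards [ae_restrict_mem hIoc] with x hx
      have := hu x (hsub hx)
      rw [← this]; ring
    rw [this, integral_add (hs.const_mul (u a)) hUs, integral_const_mul]
  have hcore := core_fubini p s hp hs
  have esplit : ∫ x in Set.Ioc a b, (p x * v x + u x * s x)
      = (∫ x in Set.Ioc a b, p x * v x) + ∫ x in Set.Ioc a b, u x * s x :=
    integral_add hpv hus
  rw [esplit, e1, e2, hub, hvb]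
  linarith [hcore]

lemma pow_primitive (g Q : ℝ → ℝ) (hg : ∀ a b : ℝ, IntegrableOn g (Set.Ioc a b))
    (hQ : ∀ a b : ℝ, a ≤ b → Q b - Q a = ∫ t in Set.Ioc a b, g t) (hQc : Continuous Q)
    (n : ℕ) : ∀ a b : ℝ, a ≤ b →
    Q b ^ (n+1) - Q a ^ (n+1) = ((n : ℝ) + 1) * ∫ t in Set.Ioc a b, g t * Q t ^ n := by
  induction n with
  | zero =>
    intro a b hab
    simpa using hQ a b hab
  | succ n ih =>
    intro a b hab
    obtain ⟨C, hC⟩ := (isCompact_Icc (a := a) (b := b)).exists_bound_of_continuousOn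
      ((hQc.pow (n+1)).continuousOn)
    have hgQ : IntegrableOn (fun t => g t * Q t ^ (n+1)) (Set.Ioc a b) := by
      have := Integrable.bdd_mul (c := C) (hg a b)
        ((hQc.pow (n+1)).aestronglyMeasurable) ?_
      · simpa [mul_comm, IntegrableOn] using this
      · filter_upwards [ae_restrict_mem measurableSet_Ioc] with x hx
        exact hC x (Set.Ioc_subset_Icc_self hx)
    have hgQn : IntegrableOn (fun t => g t * Q t ^ n) (Set.Ioc a b) := by
      obtain ⟨C', hC'⟩ := (isCompact_Icc (a := a) (b := b)).exists_bound_of_continuousOn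
        ((hQc.pow n).continuousOn)
      have := Integrable.bdd_mul (c := C') (hg a b)
        ((hQc.pow n).aestronglyMeasurable) ?_
      · simpa [mul_comm, IntegrableOn] using this
      · filter_upwards [ae_restrict_mem measurableSet_Ioc] with x hx
        exact hC' x (Set.Ioc_subset_Icc_self hx)
    have hmain := ibp_primitive hab (fun t => ((n : ℝ) + 1) * (g t * Q t ^ n)) g
      (fun x => Q x ^ (n+1)) Q (hgQn.const_mul _) (hg a b)
      (fun x hx => by
        rw [ih a x hx.1, ← integral_const_mul])
      (fun x hx => hQ a x hx.1)
      ((hQc.pow (n+1)).continuousOn) hQc.continuousOn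
    have hrhs : ∫ x in Set.Ioc a b,
        (((n : ℝ) + 1) * (g x * Q x ^ n) * Q x + Q x ^ (n+1) * g x)
        = ((n : ℝ) + 2) * ∫ t in Set.Ioc a b, g t * Q t ^ (n+1) := by
      rw [← integral_const_mul]
      refine integral_congr_ae (Filter.Eventually.of_forall fun x => ?_)
      ring
    rw [hrhs] at hmain
    have : Q b ^ (n+2) - Q a ^ (n+2) = ((n:ℝ) + 2) * ∫ t in Set.Ioc a b, g t * Q t ^ (n+1) := by
      rw [← hmain]; ring
    convert this using 2 <;> push_cast <;> ring

lemma exp_tail (x : ℝ) : ∑' n : ℕ, x ^ (n+1) / (n+1).factorial = Real.exp x - 1 := by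
  have hexp : Real.exp x = ∑' n : ℕ, x ^ n / n.factorial := by
    rw [Real.exp_eq_exp_ℝ, NormedSpace.exp_eq_tsum_div]
  have h0 := Summable.tsum_eq_zero_add (Real.summable_pow_div_factorial x)
  rw [← hexp] at h0
  simp only [pow_zero, Nat.factorial_zero, Nat.cast_one, div_one] at h0
  linarith

set_option maxHeartbeats 1000000 in
lemma exp_primitive (g Q : ℝ → ℝ) (hg : ∀ a b : ℝ, IntegrableOn g (Set.Ioc a b))
    (hQ : ∀ a b : ℝ, a ≤ b → Q b - Q a = ∫ t in Set.Ioc a b, g t) (hQc : Continuous Q)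
    (σ : ℝ) {a b : ℝ} (hab : a ≤ b) :
    σ * ∫ t in Set.Ioc a b, g t * Real.exp (σ * Q t)
      = Real.exp (σ * Q b) - Real.exp (σ * Q a) := by
  set μ := volume.restrict (Set.Ioc a b) with hμdef
  obtain ⟨C, hC⟩ := (isCompact_Icc (a := a) (b := b)).exists_bound_of_continuousOn
    hQc.continuousOn
  set f : ℕ → ℝ → ℝ := fun n t => g t * (σ ^ n * Q t ^ n / n.factorial) with hfdef
  have hmeas : ∀ n, AEStronglyMeasurable (f n) μ := fun n =>
    (hg a b).aestronglyMeasurable.mul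
      (((continuous_const.mul (hQc.pow n)).div_const _).aestronglyMeasurable)
  have hL : (∫⁻ t, ‖g t‖₊ ∂μ) < ⊤ := (hg a b).2
  have hbound : ∀ n, (∫⁻ t, ‖f n t‖₊ ∂μ)
      ≤ ENNReal.ofReal ((|σ| * |C|) ^ n / n.factorial) * ∫⁻ t, ‖g t‖₊ ∂μ := by
    intro n
    rw [← lintegral_const_mul' _ _ ENNReal.ofReal_ne_top]
    refine lintegral_mono_ae ?_
    filter_upwards [ae_restrict_mem measurableSet_Ioc] with t ht
    have hQb : |Q t| ≤ |C| := by
      have := hC t (Set.Ioc_subset_Icc_self ht)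
      simp only [Real.norm_eq_abs] at this
      exact this.trans (le_abs_self C)
    have habs : |σ ^ n * Q t ^ n / n.factorial| ≤ (|σ| * |C|) ^ n / n.factorial := by
      rw [abs_div, abs_mul, abs_pow, abs_pow, Nat.abs_cast, mul_pow]
      gcongr
      all_goals first | exact hQb | positivity
    calc (‖f n t‖₊ : ℝ≥0∞) = ENNReal.ofReal |f n t| := Real.enorm_eq_ofReal_abs _
      _ ≤ ENNReal.ofReal ((|σ| * |C|) ^ n / n.factorial * |g t|) := by
          refine ENNReal.ofReal_le_ofReal ?_
          rw [hfdef]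
          simp only [abs_mul]
          calc |g t| * |σ ^ n * Q t ^ n / ↑n.factorial|
              ≤ |g t| * ((|σ| * |C|) ^ n / n.factorial) :=
                mul_le_mul_of_nonneg_left habs (abs_nonneg _)
            _ = (|σ| * |C|) ^ n / ↑n.factorial * |g t| := by ring
      _ = ENNReal.ofReal ((|σ| * |C|) ^ n / n.factorial) * ENNReal.ofReal |g t| :=
          ENNReal.ofReal_mul (by positivity)
      _ = ENNReal.ofReal ((|σ| * |C|) ^ n / n.factorial) * (‖g t‖₊ : ℝ≥0∞) := by
          rw [← enorm_eq_nnnorm, Real.enorm_eq_ofReal_abs]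
  have hsum_lint : (∑' n : ℕ, ∫⁻ t, ‖f n t‖₊ ∂μ) ≠ ⊤ := by
    refine ne_of_lt (lt_of_le_of_lt (ENNReal.tsum_le_tsum hbound) ?_)
    rw [ENNReal.tsum_mul_right]
    exact ENNReal.mul_lt_top (by
      rw [← ENNReal.ofReal_tsum_of_nonneg (fun n => by positivity)
        (Real.summable_pow_div_factorial _)]
      exact ENNReal.ofReal_lt_top) hL
  have hswap : ∫ t, (∑' n : ℕ, f n t) ∂μ = ∑' n : ℕ, ∫ t, f n t ∂μ :=
    integral_tsum hmeas hsum_lint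
  have hpt : ∀ t, g t * Real.exp (σ * Q t) = ∑' n : ℕ, f n t := by
    intro t
    have hexp : Real.exp (σ * Q t) = ∑' n : ℕ, (σ * Q t) ^ n / n.factorial := by
      rw [Real.exp_eq_exp_ℝ, NormedSpace.exp_eq_tsum_div]
    rw [hexp, ← tsum_mul_left]
    refine tsum_congr fun n => ?_
    rw [hfdef]; simp only [mul_pow]
  have hint_eq : ∫ t, g t * Real.exp (σ * Q t) ∂μ = ∑' n : ℕ, ∫ t, f n t ∂μ := by
    rw [← hswap]
    exact integral_congr_ae (Filter.Eventually.of_forall fun t => hpt t)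
  have heach : ∀ n : ℕ, ∫ t, f n t ∂μ
      = σ ^ n / n.factorial * ((Q b ^ (n+1) - Q a ^ (n+1)) / ((n:ℝ)+1)) := by
    intro n
    have hn1 : ((n:ℝ)+1) ≠ 0 := by positivity
    have h1 : ∫ t, f n t ∂μ = σ ^ n / n.factorial * ∫ t in Set.Ioc a b, g t * Q t ^ n := by
      rw [hμdef, ← integral_const_mul]
      refine integral_congr_ae (Filter.Eventually.of_forall fun t => ?_)
      rw [hfdef]; simp only; ring
    have h2 := pow_primitive g Q hg hQ hQc n a b hab
    have h3 : ∫ t in Set.Ioc a b, g t * Q t ^ n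
        = (Q b ^ (n+1) - Q a ^ (n+1)) / ((n:ℝ)+1) := by
      rw [h2, mul_div_cancel_left₀ _ hn1]
    rw [h1, h3]
  have hsum_eq : (∑' n : ℕ, ∫ t, f n t ∂μ)
      = ∑' n : ℕ, σ ^ n / n.factorial * ((Q b ^ (n+1) - Q a ^ (n+1)) / ((n:ℝ)+1)) :=
    tsum_congr heach
  have hterm : ∀ n : ℕ,
      σ * (σ ^ n / n.factorial * ((Q b ^ (n+1) - Q a ^ (n+1)) / ((n:ℝ)+1)))
      = (σ * Q b) ^ (n+1) / ((n+1).factorial : ℝ)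
        - (σ * Q a) ^ (n+1) / ((n+1).factorial : ℝ) := by
    intro n
    have hn : ((n.factorial : ℝ)) ≠ 0 := Nat.cast_ne_zero.mpr n.factorial_ne_zero
    have hfs : (((n+1).factorial : ℕ) : ℝ) = ((n:ℝ)+1) * (n.factorial : ℝ) := by
      rw [Nat.factorial_succ]; push_cast; ring
    rw [hfs]
    have hn1 : ((n:ℝ)+1) ≠ 0 := by positivity
    field_simp
    ring
  have hS1 : Summable (fun n : ℕ => (σ * Q b) ^ (n+1) / ((n+1).factorial : ℝ)) :=
    (summable_nat_add_iff 1).mpr (Real.summable_pow_div_factorial (σ * Q b))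
  have hS2 : Summable (fun n : ℕ => (σ * Q a) ^ (n+1) / ((n+1).factorial : ℝ)) :=
    (summable_nat_add_iff 1).mpr (Real.summable_pow_div_factorial (σ * Q a))
  calc σ * ∫ t, g t * Real.exp (σ * Q t) ∂μ
      = σ * ∑' n : ℕ, σ ^ n / n.factorial * ((Q b ^ (n+1) - Q a ^ (n+1)) / ((n:ℝ)+1)) := by
        rw [hint_eq, hsum_eq]
    _ = ∑' n : ℕ, σ * (σ ^ n / n.factorial * ((Q b ^ (n+1) - Q a ^ (n+1)) / ((n:ℝ)+1))) :=
        (tsum_mul_left).symm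
    _ = ∑' n : ℕ, ((σ * Q b) ^ (n+1) / ((n+1).factorial : ℝ)
          - (σ * Q a) ^ (n+1) / ((n+1).factorial : ℝ)) := tsum_congr hterm
    _ = (∑' n : ℕ, (σ * Q b) ^ (n+1) / ((n+1).factorial : ℝ))
          - ∑' n : ℕ, (σ * Q a) ^ (n+1) / ((n+1).factorial : ℝ) := Summable.tsum_sub hS1 hS2
    _ = (Real.exp (σ * Q b) - 1) - (Real.exp (σ * Q a) - 1) := by
        rw [exp_tail, exp_tail]
    _ = Real.exp (σ * Q b) - Real.exp (σ * Q a) := by ring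

set_option maxHeartbeats 2000000 in
theorem stmt19 (r q : ℝ → ℝ) (hr : Continuous r) (hrpos : ∀ x, 0 < r x)
    (hq : LocallyIntegrable q volume) (hqnn : ∀ x, 0 ≤ q x)
    (hS1 : S1E r q = ⊤) (hq0 : 0 < ⨅ x, q x)
    (hqtop : Tendsto q atTop atTop) (hqbot : Tendsto q atBot atTop) :
    CorrectlySolvableC r q := by
  have habs_tendsto : ∀ (u : ℝ → ℝ) (l : Filter ℝ),
      (∀ ε > 0, ∀ᶠ x in l, |u x| < ε) → Tendsto u l (nhds 0) := by
    intro u l h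
    rw [Metric.tendsto_nhds]
    intro ε hε
    filter_upwards [h ε hε] with x hx
    rwa [Real.dist_eq, sub_zero]
  have hS1' : (∫⁻ t in Set.Iio (0:ℝ), ENNReal.ofReal (q t / r t)) = ⊤ := hS1
  clear hS1
  have hbdd : BddBelow (Set.range q) := ⟨0, fun y ⟨x, hx⟩ => hx ▸ hqnn x⟩
  set q0 := ⨅ x, q x with hq0def
  have hq_ge : ∀ x, q0 ≤ q x := fun x => ciInf_le hbdd x
  set g : ℝ → ℝ := fun t => q t / r t with hgdef
  have hgnn : ∀ t, 0 ≤ g t := fun t => div_nonneg (hqnn t) (hrpos t).le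
  have hrne : ∀ t, r t ≠ 0 := fun t => (hrpos t).ne'
  have hgloc : LocallyIntegrable g volume := by
    rw [MeasureTheory.locallyIntegrable_iff]
    intro k hk
    obtain ⟨C, hC⟩ := hk.exists_bound_of_continuousOn ((hr.inv₀ hrne).continuousOn)
    have hqk : IntegrableOn q k volume := hq.integrableOn_isCompact hk
    have := Integrable.bdd_mul (c := C) hqk ((hr.inv₀ hrne).aestronglyMeasurable) ?_
    · refine this.congr (Filter.Eventually.of_forall fun t => ?_)
      simp only [hgdef]; simp [div_eq_inv_mul]
    · filter_upwards [ae_restrict_mem hk.measurableSet] with x hx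
      exact hC x hx
  have hgIoc : ∀ a b : ℝ, IntegrableOn g (Set.Ioc a b) :=
    fun a b => (hgloc.integrableOn_isCompact isCompact_Icc).mono_set Set.Ioc_subset_Icc_self
  have hgInt : ∀ a b : ℝ, IntervalIntegrable g volume a b :=
    fun a b => (hgloc.integrableOn_isCompact isCompact_uIcc).intervalIntegrable
  set Q : ℝ → ℝ := fun x => ∫ t in (0:ℝ)..x, g t with hQdef
  have hQc : Continuous Q := intervalIntegral.continuous_primitive hgInt 0
  have hQprop : ∀ a b : ℝ, a ≤ b → Q b - Q a = ∫ t in Set.Ioc a b, g t := by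
    intro a b hab
    have h1 := intervalIntegral.integral_add_adjacent_intervals (hgInt 0 a) (hgInt a b)
    have h2 : ∫ t in a..b, g t = ∫ t in Set.Ioc a b, g t :=
      intervalIntegral.integral_of_le hab
    rw [hQdef]; simp only
    rw [← h2, ← h1]; ring
  have hQmono : Monotone Q := by
    intro a b hab
    have h1 := hQprop a b hab
    have h2 : 0 ≤ ∫ t in Set.Ioc a b, g t :=
      setIntegral_nonneg measurableSet_Ioc fun t _ => hgnn t
    linarith
  have hQ0 : Q 0 = 0 := intervalIntegral.integral_same
  have hEprim : ∀ a b : ℝ, a ≤ b →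
      ∫ t in Set.Ioc a b, g t * Real.exp (Q t) = Real.exp (Q b) - Real.exp (Q a) := by
    intro a b hab
    have := exp_primitive g Q hgIoc hQprop hQc 1 hab
    simpa using this
  have hWprim : ∀ a b : ℝ, a ≤ b →
      ∫ t in Set.Ioc a b, g t * Real.exp (-Q t) = Real.exp (-Q a) - Real.exp (-Q b) := by
    intro a b hab
    have := exp_primitive g Q hgIoc hQprop hQc (-1) hab
    simp only [neg_one_mul] at this
    linarith
  set W : ℝ → ℝ := fun t => g t * Real.exp (-Q t) with hWdef
  have hWnn : ∀ t, 0 ≤ W t := fun t => mul_nonneg (hgnn t) (Real.exp_pos _).le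
  have hmulInt : ∀ (φ : ℝ → ℝ), Continuous φ → ∀ a b : ℝ,
      IntegrableOn (fun t => g t * φ t) (Set.Ioc a b) := by
    intro φ hφ a b
    obtain ⟨C, hC⟩ := (isCompact_Icc (a := a) (b := b)).exists_bound_of_continuousOn
      hφ.continuousOn
    have := Integrable.bdd_mul (c := C) (hgIoc a b) hφ.aestronglyMeasurable ?_
    · simpa [mul_comm, IntegrableOn] using this
    · filter_upwards [ae_restrict_mem measurableSet_Ioc] with x hx
      exact hC x (Set.Ioc_subset_Icc_self hx)
  have hWIoc : ∀ a b : ℝ, IntegrableOn W (Set.Ioc a b) :=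
    fun a b => hmulInt _ (Real.continuous_exp.comp hQc.neg) a b
  have hWIoi : ∀ x : ℝ, IntegrableOn W (Set.Ioi x) := by
    intro x
    refine integrableOn_Ioi_of_intervalIntegral_norm_bounded (Real.exp (-Q x)) x
      (fun i : ℝ => hWIoc x i) tendsto_id ?_
    filter_upwards [eventually_ge_atTop x] with i hi
    try simp only [id_eq]
    have h1 : ∫ t in x..i, ‖W t‖ = ∫ t in Set.Ioc x i, W t := by
      rw [intervalIntegral.integral_of_le hi]
      exact setIntegral_congr_ae measurableSet_Ioc
        (Filter.Eventually.of_forall fun t _ => Real.norm_of_nonneg (hWnn t))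
    rw [h1, hWprim x i hi]
    have := (Real.exp_pos (-Q i)).le
    linarith
  have hWtail : ∀ x : ℝ, ∫ t in Set.Ioi x, W t ≤ Real.exp (-Q x) := by
    intro x
    have htend := intervalIntegral_tendsto_integral_Ioi x (hWIoi x) tendsto_id
    refine le_of_tendsto htend ?_
    filter_upwards [eventually_ge_atTop x] with i hi
    try simp only [id_eq]
    rw [intervalIntegral.integral_of_le hi, hWprim x i hi]
    have := (Real.exp_pos (-Q i)).le
    linarith
  -- Q tends to -infinity at -infinity, from S1 = ∞
  have hQunbdd : ∀ c : ℝ, ∃ x : ℝ, Q x ≤ c := by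
    intro c
    by_contra hcon
    push_neg at hcon
    have haem : AEMeasurable (fun t => ENNReal.ofReal (g t)) volume :=
      (hgloc.aestronglyMeasurable.aemeasurable).ennreal_ofReal
    set h' := haem.mk _ with hh'def
    have hh'm : Measurable h' := haem.measurable_mk
    have hset : ∀ s : Set ℝ, ∫⁻ t in s, ENNReal.ofReal (g t) = ∫⁻ t in s, h' t :=
      fun s => lintegral_congr_ae (ae_restrict_of_ae haem.ae_eq_mk)
    set ν := volume.withDensity h' with hνdef
    have hν : ∀ s : Set ℝ, MeasurableSet s → ν s = ∫⁻ t in s, ENNReal.ofReal (g t) := by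
      intro s hs
      rw [hνdef, withDensity_apply _ hs, hset]
    have hmono : Monotone (fun n : ℕ => Set.Ioc (-(n:ℝ)) 0) := by
      intro n m hnm
      apply Set.Ioc_subset_Ioc _ le_rfl
      simp only [neg_le_neg_iff]
      exact_mod_cast hnm
    have hunion : (⋃ n : ℕ, Set.Ioc (-(n:ℝ)) 0) = Set.Iic 0 := by
      ext t
      simp only [Set.mem_iUnion, Set.mem_Ioc, Set.mem_Iic]
      constructor
      · rintro ⟨n, _, ht⟩; exact ht
      · intro ht
        obtain ⟨n, hn⟩ := exists_nat_gt (-t)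
        exact ⟨n, by linarith, ht⟩
    have htendν := tendsto_measure_iUnion_atTop (μ := ν) hmono
    rw [hunion] at htendν
    have hpart : ∀ n : ℕ, ν (Set.Ioc (-(n:ℝ)) 0) ≤ ENNReal.ofReal (-c) := by
      intro n
      rw [hν _ measurableSet_Ioc]
      have hn0 : (-(n:ℝ)) ≤ 0 := neg_nonpos.mpr (Nat.cast_nonneg n)
      have hint : ∫ t in Set.Ioc (-(n:ℝ)) 0, g t ≤ -c := by
        have h1 := hQprop (-(n:ℝ)) 0 hn0
        have h2 := hcon (-(n:ℝ))
        rw [hQ0] at h1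
        linarith
      rw [← ofReal_integral_eq_lintegral_ofReal (hgIoc _ _)
        (Filter.Eventually.of_forall fun t => hgnn t)]
      exact ENNReal.ofReal_le_ofReal hint
    have hlim : ν (Set.Iic 0) ≤ ENNReal.ofReal (-c) :=
      le_of_tendsto htendν (Filter.Eventually.of_forall hpart)
    have htop : ν (Set.Iio 0) = ⊤ := by
      rw [hν _ measurableSet_Iio]
      exact hS1'
    have hfin : (⊤ : ℝ≥0∞) ≤ ENNReal.ofReal (-c) :=
      htop ▸ (measure_mono Set.Iio_subset_Iic_self).trans hlim
    exact ENNReal.ofReal_ne_top (top_le_iff.mp hfin)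
  have hQbot : Tendsto Q atBot atBot :=
    tendsto_atBot_atBot_of_monotone hQmono (fun b => hQunbdd b)
  refine ⟨q0⁻¹, inv_pos.mpr hq0, ?_⟩
  intro f hf hMex
  obtain ⟨M₀, hM₀⟩ := hMex
  have hMbdd : BddAbove (Set.range fun t => |f t|) := ⟨M₀, fun z ⟨t, ht⟩ => ht ▸ hM₀ t⟩
  set Ms := ⨆ t, |f t| with hMsdef
  have hMs : ∀ t, |f t| ≤ Ms := fun t => le_ciSup hMbdd t
  have hMsnn : 0 ≤ Ms := le_trans (abs_nonneg (f 0)) (hMs 0)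
  set K : ℝ → ℝ := fun t => f t / r t * Real.exp (-Q t) with hKdef
  have hKc : Continuous K := (hf.div hr hrne).mul (Real.continuous_exp.comp hQc.neg)
  have hKabs : ∀ (A : ℝ) (t : ℝ), 0 ≤ A → |f t| ≤ A * q t → |K t| ≤ A * W t := by
    intro A t hA hft
    have h1 : |K t| = |f t| / r t * Real.exp (-Q t) := by
      simp only [hKdef]
      rw [abs_mul, abs_div, abs_of_pos (hrpos t), abs_of_pos (Real.exp_pos _)]
    rw [h1]; simp only [hWdef]
    have h2 : |f t| / r t ≤ A * (q t / r t) := by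
      have he : A * (q t / r t) = A * q t / r t := by ring
      rw [he, div_le_div_iff_of_pos_right (hrpos t)]
      exact hft
    calc |f t| / r t * Real.exp (-Q t) ≤ A * (q t / r t) * Real.exp (-Q t) :=
          mul_le_mul_of_nonneg_right h2 (Real.exp_pos _).le
      _ = A * (q t / r t * Real.exp (-Q t)) := by ring
  have hKabs0 : ∀ t, |K t| ≤ Ms / q0 * W t := by
    intro t
    refine hKabs _ t (by positivity) ?_
    rw [div_mul_eq_mul_div, le_div_iff₀ hq0]
    calc |f t| * q0 ≤ Ms * q0 := mul_le_mul_of_nonneg_right (hMs t) hq0.le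
      _ ≤ Ms * q t := mul_le_mul_of_nonneg_left (hq_ge t) hMsnn
  have hKIoi : ∀ x : ℝ, IntegrableOn K (Set.Ioi x) := by
    intro x
    refine Integrable.mono ((hWIoi x).const_mul (Ms / q0)) hKc.aestronglyMeasurable ?_
    refine Filter.Eventually.of_forall fun t => ?_
    rw [Real.norm_eq_abs, Real.norm_eq_abs]
    exact (hKabs0 t).trans (le_abs_self _)
  set F : ℝ → ℝ := fun x => ∫ t in Set.Ioi x, K t with hFdef
  have hKIocInt : ∀ a b : ℝ, IntegrableOn K (Set.Ioc a b) := fun a b => hKc.integrableOn_Ioc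
  have hFsub : ∀ a b : ℝ, a ≤ b → F a - F b = ∫ t in Set.Ioc a b, K t := by
    intro a b hab
    have hu : Set.Ioc a b ∪ Set.Ioi b = Set.Ioi a := Set.Ioc_union_Ioi_eq_Ioi hab
    have h2 := setIntegral_union (Set.Ioc_disjoint_Ioi le_rfl) measurableSet_Ioi
      (hKIocInt a b) (hKIoi b)
    rw [hu] at h2
    simp only [hFdef]
    rw [h2]; ring
  have hFabs : ∀ x, |F x| ≤ Ms / q0 * Real.exp (-Q x) := by
    intro x
    have h1 : |F x| ≤ ∫ t in Set.Ioi x, |K t| := by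
      simp only [hFdef]
      simpa [Real.norm_eq_abs] using
        norm_integral_le_integral_norm (μ := volume.restrict (Set.Ioi x)) K
    have h2 : ∫ t in Set.Ioi x, |K t| ≤ ∫ t in Set.Ioi x, Ms / q0 * W t :=
      integral_mono (hKIoi x).abs ((hWIoi x).const_mul _) fun t => hKabs0 t
    have h3 : ∫ t in Set.Ioi x, Ms / q0 * W t = Ms / q0 * ∫ t in Set.Ioi x, W t :=
      integral_const_mul _ _
    have h4 : Ms / q0 * ∫ t in Set.Ioi x, W t ≤ Ms / q0 * Real.exp (-Q x) :=
      mul_le_mul_of_nonneg_left (hWtail x) (by positivity)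
    linarith
  set y : ℝ → ℝ := fun x => Real.exp (Q x) * F x with hydef
  have hybound : ∀ x, |y x| ≤ Ms / q0 := by
    intro x
    have h1 : |y x| = Real.exp (Q x) * |F x| := by
      simp only [hydef]
      rw [abs_mul, abs_of_pos (Real.exp_pos _)]
    rw [h1]
    have h2 : Real.exp (Q x) * |F x| ≤ Real.exp (Q x) * (Ms / q0 * Real.exp (-Q x)) :=
      mul_le_mul_of_nonneg_left (hFabs x) (Real.exp_pos _).le
    have h3 : Real.exp (Q x) * (Ms / q0 * Real.exp (-Q x)) = Ms / q0 := by
      rw [Real.exp_neg]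
      field_simp
    linarith
  have hFc : Continuous F := by
    have hKint : ∀ a b : ℝ, IntervalIntegrable K volume a b :=
      fun a b => hKc.intervalIntegrable a b
    have hrep : ∀ x, F x = F 0 - ∫ t in (0:ℝ)..x, K t := by
      intro x
      rcases le_total 0 x with h | h
      · have := hFsub 0 x h
        rw [intervalIntegral.integral_of_le h]
        linarith
      · have := hFsub x 0 h
        rw [intervalIntegral.integral_symm, intervalIntegral.integral_of_le h]
        linarith
    have : F = fun x => F 0 - ∫ t in (0:ℝ)..x, K t := funext hrep
    rw [this]
    exact continuous_const.sub (intervalIntegral.continuous_primitive hKint 0)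
  have hyc : Continuous y := (Real.continuous_exp.comp hQc).mul hFc
  have hexpQ : ∀ t : ℝ, Real.exp (Q t) * Real.exp (-Q t) = 1 := by
    intro t
    rw [← Real.exp_add]
    simp
  have hEIoc : ∀ a b : ℝ, IntegrableOn (fun t => g t * Real.exp (Q t)) (Set.Ioc a b) :=
    fun a b => hmulInt _ (Real.continuous_exp.comp hQc) a b
  have hkey : ∀ a b : ℝ, a ≤ b →
      y b - y a = ∫ t in Set.Ioc a b, (g t * y t - f t / r t) := by
    intro a b hab
    have hmain := ibp_primitive hab (fun t => g t * Real.exp (Q t)) (fun t => -(K t))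
      (fun x => Real.exp (Q x)) F (hEIoc a b) ((hKIocInt a b).neg)
      (fun x hx => by rw [hEprim a x hx.1])
      (fun x hx => by
        rw [integral_neg, ← hFsub a x hx.1]; ring)
      ((Real.continuous_exp.comp hQc).continuousOn) hFc.continuousOn
    have hcongr : ∫ x in Set.Ioc a b,
        (g x * Real.exp (Q x) * F x + Real.exp (Q x) * -(K x))
        = ∫ t in Set.Ioc a b, (g t * y t - f t / r t) := by
      refine integral_congr_ae (Filter.Eventually.of_forall fun t => ?_)
      have h5 : Real.exp (Q t) * K t = f t / r t := by
        simp only [hKdef]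
        calc Real.exp (Q t) * (f t / r t * Real.exp (-Q t))
            = f t / r t * (Real.exp (Q t) * Real.exp (-Q t)) := by ring
          _ = f t / r t := by rw [hexpQ t, mul_one]
      simp only [hydef]
      calc g t * Real.exp (Q t) * F t + Real.exp (Q t) * -(K t)
          = g t * (Real.exp (Q t) * F t) - Real.exp (Q t) * K t := by ring
        _ = g t * (Real.exp (Q t) * F t) - f t / r t := by rw [h5]
    simp only [hydef] at hmain ⊢
    rw [← hcongr, ← hmain]
  have hptw : ∀ t, (q t * y t - f t) / r t = g t * y t - f t / r t := by
    intro t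
    simp only [hgdef]
    rw [sub_div, div_mul_eq_mul_div]
  have hIdent : ∀ a b : ℝ, y b - y a = ∫ t in a..b, (q t * y t - f t) / r t := by
    have hle : ∀ a b : ℝ, a ≤ b → y b - y a = ∫ t in a..b, (q t * y t - f t) / r t := by
      intro a b hab
      rw [intervalIntegral.integral_of_le hab]
      rw [hkey a b hab]
      refine integral_congr_ae (Filter.Eventually.of_forall fun t => ?_)
      simpa using (hptw t).symm
    intro a b
    rcases le_total a b with h | h
    · exact hle a b h
    · have h1 := hle b a h
      rw [intervalIntegral.integral_symm]
      linarith
  have hexpQx : ∀ x : ℝ, |y x| = Real.exp (Q x) * |F x| := by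
    intro x
    simp only [hydef]
    rw [abs_mul, abs_of_pos (Real.exp_pos _)]
  have hytop : Tendsto y atTop (nhds 0) := by
    refine habs_tendsto y atTop ?_
    intro ε hε
    have hε2 : 0 < ε / 2 := by linarith
    obtain ⟨X, hX⟩ := Filter.eventually_atTop.mp (hqtop.eventually_ge_atTop ((Ms + 1) / (ε / 2)))
    filter_upwards [eventually_ge_atTop X] with x hx
    have hKt : ∀ t ∈ Set.Ioi x, |K t| ≤ ε / 2 * W t := by
      intro t ht
      refine hKabs _ t hε2.le ?_
      have hq_t : (Ms + 1) / (ε / 2) ≤ q t := hX t (le_of_lt (lt_of_le_of_lt hx ht))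
      rw [div_le_iff₀ hε2] at hq_t
      nlinarith [hMs t, hqnn t]
    have h2 : |F x| ≤ ε / 2 * Real.exp (-Q x) := by
      have ha : |F x| ≤ ∫ t in Set.Ioi x, |K t| := by
        simp only [hFdef]
        simpa [Real.norm_eq_abs] using
          norm_integral_le_integral_norm (μ := volume.restrict (Set.Ioi x)) K
      have hb : ∫ t in Set.Ioi x, |K t| ≤ ∫ t in Set.Ioi x, ε / 2 * W t :=
        setIntegral_mono_on (hKIoi x).abs ((hWIoi x).const_mul _) measurableSet_Ioi hKt
      have hc : ∫ t in Set.Ioi x, ε / 2 * W t = ε / 2 * ∫ t in Set.Ioi x, W t :=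
        integral_const_mul _ _
      have hd : ε / 2 * ∫ t in Set.Ioi x, W t ≤ ε / 2 * Real.exp (-Q x) :=
        mul_le_mul_of_nonneg_left (hWtail x) hε2.le
      linarith
    rw [hexpQx x]
    calc Real.exp (Q x) * |F x| ≤ Real.exp (Q x) * (ε / 2 * Real.exp (-Q x)) :=
          mul_le_mul_of_nonneg_left h2 (Real.exp_pos _).le
      _ = ε / 2 * (Real.exp (Q x) * Real.exp (-Q x)) := by ring
      _ = ε / 2 := by rw [hexpQ x, mul_one]
      _ < ε := by linarith
  have hybot : Tendsto y atBot (nhds 0) := by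
    refine habs_tendsto y atBot ?_
    intro ε hε
    have hε2 : 0 < ε / 2 := by linarith
    obtain ⟨A, hA⟩ := Filter.eventually_atBot.mp (hqbot.eventually_ge_atTop ((Ms + 1) / (ε / 2)))
    set CA := |∫ t in Set.Ioi A, K t| with hCAdef
    have hCAnn : 0 ≤ CA := abs_nonneg _
    have htail0 : Tendsto (fun x => Real.exp (Q x) * CA) atBot (nhds 0) := by
      have h0 := (Real.tendsto_exp_atBot.comp hQbot).mul_const CA
      simpa using h0
    have hev2 : ∀ᶠ x in atBot, |Real.exp (Q x) * CA| < ε / 2 := by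
      filter_upwards [Metric.tendsto_nhds.mp htail0 _ hε2] with x hx
      rwa [Real.dist_eq, sub_zero] at hx
    filter_upwards [eventually_le_atBot A, hev2] with x hxA hx2
    have hsplit : F x = (∫ t in Set.Ioc x A, K t) + ∫ t in Set.Ioi A, K t := by
      have h0 := hFsub x A hxA
      simp only [hFdef] at h0 ⊢
      linarith
    have hKt : ∀ t ∈ Set.Ioc x A, |K t| ≤ ε / 2 * W t := by
      intro t ht
      refine hKabs _ t hε2.le ?_
      have hq_t := hA t ht.2
      rw [div_le_iff₀ hε2] at hq_t
      nlinarith [hMs t, hqnn t]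
    have hIocbound : |∫ t in Set.Ioc x A, K t|
        ≤ ε / 2 * (Real.exp (-Q x) - Real.exp (-Q A)) := by
      have ha : |∫ t in Set.Ioc x A, K t| ≤ ∫ t in Set.Ioc x A, |K t| := by
        simpa [Real.norm_eq_abs] using
          norm_integral_le_integral_norm (μ := volume.restrict (Set.Ioc x A)) K
      have hb : ∫ t in Set.Ioc x A, |K t| ≤ ∫ t in Set.Ioc x A, ε / 2 * W t :=
        setIntegral_mono_on (hKIocInt x A).abs ((hWIoc x A).const_mul _) measurableSet_Ioc hKt
      have hc : ∫ t in Set.Ioc x A, ε / 2 * W t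
          = ε / 2 * (Real.exp (-Q x) - Real.exp (-Q A)) := by
        rw [integral_const_mul, hWprim x A hxA]
      linarith
    have h2 : |F x| ≤ ε / 2 * (Real.exp (-Q x) - Real.exp (-Q A)) + CA := by
      rw [hsplit]
      calc |(∫ t in Set.Ioc x A, K t) + ∫ t in Set.Ioi A, K t|
          ≤ |∫ t in Set.Ioc x A, K t| + |∫ t in Set.Ioi A, K t| := abs_add_le _ _
        _ ≤ ε / 2 * (Real.exp (-Q x) - Real.exp (-Q A)) + CA := by
            rw [hCAdef]; exact add_le_add hIocbound le_rfl
    have h3 : Real.exp (Q x) * (ε / 2 * (Real.exp (-Q x) - Real.exp (-Q A))) ≤ ε / 2 := by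
      have hEQ := hexpQ x
      have hnn : (0:ℝ) ≤ Real.exp (Q x) * Real.exp (-Q A) := by positivity
      nlinarith [hε2.le]
    have h4 : Real.exp (Q x) * |F x| ≤ ε / 2 + Real.exp (Q x) * CA :=
      calc Real.exp (Q x) * |F x|
          ≤ Real.exp (Q x) * (ε / 2 * (Real.exp (-Q x) - Real.exp (-Q A)) + CA) :=
            mul_le_mul_of_nonneg_left h2 (Real.exp_pos _).le
        _ = Real.exp (Q x) * (ε / 2 * (Real.exp (-Q x) - Real.exp (-Q A)))
            + Real.exp (Q x) * CA := by ring
        _ ≤ ε / 2 + Real.exp (Q x) * CA := by linarith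
    have h5 : Real.exp (Q x) * CA < ε / 2 := by
      have h6 : |Real.exp (Q x) * CA| = Real.exp (Q x) * CA := abs_of_nonneg (by positivity)
      rwa [h6] at hx2
    rw [hexpQx x]
    linarith
  have hsol : IsSolution r q f y := ⟨hyc, hIdent, hybot, hytop⟩
  have hmulInt2 : ∀ (φ : ℝ → ℝ), Continuous φ → ∀ a b : ℝ,
      IntervalIntegrable (fun t => g t * φ t) volume a b := by
    intro φ hφ a b
    obtain ⟨C, hC⟩ := (isCompact_uIcc (a := a) (b := b)).exists_bound_of_continuousOn
      hφ.continuousOn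
    have h2 := Integrable.bdd_mul (c := C)
      (hgloc.integrableOn_isCompact (isCompact_uIcc (a := a) (b := b))) hφ.aestronglyMeasurable ?_
    · exact IntegrableOn.intervalIntegrable (by simpa [mul_comm, IntegrableOn] using h2)
    · filter_upwards [ae_restrict_mem measurableSet_uIcc] with x hx
      exact hC x hx
  have huniq : ∀ y₁ y₂ : ℝ → ℝ, IsSolution r q f y₁ → IsSolution r q f y₂ → y₁ = y₂ := by
    intro y₁ y₂ h₁ h₂
    obtain ⟨hc₁, hi₁, hb₁, ht₁⟩ := h₁
    obtain ⟨hc₂, hi₂, hb₂, ht₂⟩ := h₂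
    set z : ℝ → ℝ := fun x => y₁ x - y₂ x with hzdef
    have hzc : Continuous z := hc₁.sub hc₂
    have hgyInt : ∀ (u : ℝ → ℝ), Continuous u → ∀ a b : ℝ,
        IntervalIntegrable (fun t => (q t * u t - f t) / r t) volume a b := by
      intro u hu a b
      have he : (fun t => (q t * u t - f t) / r t) = fun t => g t * u t - f t / r t := by
        funext t
        simp only [hgdef]
        rw [sub_div, div_mul_eq_mul_div]
      rw [he]
      exact (hmulInt2 u hu a b).sub ((hf.div hr hrne).intervalIntegrable a b)
    have hz : ∀ a b : ℝ, a ≤ b → z b - z a = ∫ t in Set.Ioc a b, g t * z t := by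
      intro a b hab
      have e1 := hi₁ a b
      have e2 := hi₂ a b
      have e3 : (∫ t in a..b, (q t * y₁ t - f t) / r t)
            - ∫ t in a..b, (q t * y₂ t - f t) / r t
          = ∫ t in a..b, ((q t * y₁ t - f t) / r t - (q t * y₂ t - f t) / r t) :=
        (intervalIntegral.integral_sub (hgyInt y₁ hc₁ a b) (hgyInt y₂ hc₂ a b)).symm
      have e4 : ∀ t : ℝ, (q t * y₁ t - f t) / r t - (q t * y₂ t - f t) / r t = g t * z t := by
        intro t
        simp only [hzdef, hgdef]
        field_simp
        ring
      have e5 : (∫ t in a..b, ((q t * y₁ t - f t) / r t - (q t * y₂ t - f t) / r t))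
          = ∫ t in Set.Ioc a b, g t * z t := by
        rw [intervalIntegral.integral_of_le hab]
        exact setIntegral_congr_ae measurableSet_Ioc
          (Filter.Eventually.of_forall fun t _ => e4 t)
      simp only [hzdef]
      rw [← e5, ← e3]
      linarith
    have hzw : ∀ a b : ℝ, a ≤ b → z b * Real.exp (-Q b) = z a * Real.exp (-Q a) := by
      intro a b hab
      have hWneg : ∀ a' b' : ℝ, a' ≤ b' → Real.exp (-Q b') - Real.exp (-Q a')
          = ∫ t in Set.Ioc a' b', -(W t) := by
        intro a' b' hab'
        rw [integral_neg, hWprim a' b' hab']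
        ring
      have hgz : IntegrableOn (fun t => g t * z t) (Set.Ioc a b) := hmulInt _ hzc a b
      have hmain := ibp_primitive hab (fun t => g t * z t) (fun t => -(W t))
        z (fun x => Real.exp (-Q x)) hgz ((hWIoc a b).neg)
        (fun x hx => hz a x hx.1)
        (fun x hx => hWneg a x hx.1)
        hzc.continuousOn ((Real.continuous_exp.comp hQc.neg).continuousOn)
      have hzero : (∫ x in Set.Ioc a b, (g x * z x * Real.exp (-Q x) + z x * -(W x))) = 0 := by
        have hpt : ∀ x : ℝ, g x * z x * Real.exp (-Q x) + z x * -(W x) = 0 := by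
          intro x
          simp only [hWdef]
          ring
        rw [show (fun x => g x * z x * Real.exp (-Q x) + z x * -(W x)) = (fun _ : ℝ => (0:ℝ))
          from funext hpt]
        simp
      rw [hzero] at hmain
      linarith
    have hexpneg : ∀ x : ℝ, Real.exp (-Q x) ≠ 0 := fun x => (Real.exp_pos _).ne'
    have hzQ0 : Real.exp (-Q 0) = 1 := by rw [hQ0]; simp
    have hz0 : z 0 = 0 := by
      by_contra hne
      have habs0 : 0 < |z 0| := abs_pos.mpr hne
      have hzx : ∀ x : ℝ, 0 ≤ x → |z 0| ≤ |z x| := by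
        intro x hx
        have h1 := hzw 0 x hx
        rw [hzQ0, mul_one] at h1
        have h2 : z x = z 0 * Real.exp (Q x) := by
          have hEx := hexpQ x
          calc z x = z x * (Real.exp (-Q x) * Real.exp (Q x)) := by
                rw [mul_comm (Real.exp (-Q x)), hEx, mul_one]
            _ = (z x * Real.exp (-Q x)) * Real.exp (Q x) := by ring
            _ = z 0 * Real.exp (Q x) := by rw [h1]
        rw [h2, abs_mul, abs_of_pos (Real.exp_pos _)]
        have h3 : (1:ℝ) ≤ Real.exp (Q x) := by
          rw [← Real.exp_zero]
          exact Real.exp_le_exp.mpr (hQ0 ▸ hQmono hx)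
        nlinarith
      have hzt : Tendsto z atTop (nhds 0) := by
        have h0 := ht₁.sub ht₂
        simpa using h0
      obtain ⟨x, hx1, hx2⟩ :=
        ((Metric.tendsto_nhds.mp hzt (|z 0|) habs0).and (eventually_ge_atTop (0:ℝ))).exists
      rw [Real.dist_eq, sub_zero] at hx1
      exact absurd hx1 (not_lt.mpr (hzx x hx2))
    have hzall : ∀ x, z x = 0 := by
      intro x
      rcases le_total 0 x with h | h
      · have h1 := hzw 0 x h
        rw [hzQ0, mul_one, hz0] at h1
        exact (mul_eq_zero.mp h1).resolve_right (hexpneg x)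
      · have h1 := hzw x 0 h
        rw [hzQ0, mul_one, hz0] at h1
        exact (mul_eq_zero.mp h1.symm).resolve_right (hexpneg x)
    funext x
    have hzx := hzall x
    simp only [hzdef] at hzx
    linarith
  constructor
  · exact ⟨y, hsol, fun y' h' => huniq y' y h' hsol⟩
  · intro y' h' x
    rw [huniq y' y h' hsol]
    have hb := hybound x
    rw [div_eq_inv_mul] at hb
    exact hb
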